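/- Let d ≥ 1 and let σ be a density matrix on C^d ⊗ C^d with Tr_B σ = I_d/d, where (Tr_B σ)_{ij} = ∑_b σ_{(i,b),(j,b)}. Let √σ denote the positive semidefinite square root of σ, and for h, k ∈ {1,…,d} define the d×d matrices N^{(h,k)} with entries (N^{(h,k)})_{b,a} := √d · (√σ)_{(a,b),(k,h)}. Then: (i) ∑_{h,k=1}^d (N^{(h,k)})† N^{(h,k)} = I_d; and (ii) the completely positive trace-preserving map T(τ) := ∑_{h,k=1}^d N^{(h,k)} τ (N^{(h,k)})† on d×d matrices has Choi state equal to σ, i.e., (id_d ⊗ T)(ψ_d) = σ, where ψ_d = (1/d)·∑_{i,j=1}^d |ii⟩⟨jj| is the maximally entangled state on C^d ⊗ C^d. -/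

import Mathlib

open scoped Kronecker ComplexOrder
open Matrix

noncomputable section

/-- The positive semidefinite square root, as defined in the older Mathlib
(`Matrix.PosSemidef.sqrt`, since removed). -/
def Matrix.PosSemidef.sqrt {n 𝕜 : Type*} [Fintype n] [RCLike 𝕜] [DecidableEq n]
    {A : Matrix n n 𝕜} (hA : A.PosSemidef) : Matrix n n 𝕜 :=
  (hA.1.eigenvectorUnitary : Matrix n n 𝕜) * diagonal ((↑) ∘ (√·) ∘ hA.1.eigenvalues) *
    (star hA.1.eigenvectorUnitary : Matrix n n 𝕜)

/-- Partial trace over the second tensor factor. -/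
def ptraceB {m k : Type*} [Fintype k] (M : Matrix (m × k) (m × k) ℂ) : Matrix m m ℂ :=
  Matrix.of fun i j => ∑ b, M (i, b) (j, b)

/-- The extension `id ⊗ T` of a map on matrices to a bipartite system. -/
def idTensorFun {n d d' : Type*} (T : Matrix d d ℂ → Matrix d' d' ℂ)
    (M : Matrix (n × d) (n × d) ℂ) : Matrix (n × d') (n × d') ℂ :=
  Matrix.of fun p q => T (Matrix.of fun a b => M (p.1, a) (q.1, b)) p.2 q.2

/-- The maximally entangled state `ψ_d = (1/d) ∑_{i,j} |ii⟩⟨jj|`. -/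
def maxEnt (d : ℕ) : Matrix (Fin d × Fin d) (Fin d × Fin d) ℂ :=
  Matrix.of fun p q => if p.1 = p.2 ∧ q.1 = q.2 then (1 / (d:ℂ)) else 0

/-- The Kraus operators `N^{(h,k)}` built from a matrix `R` (to be taken as `√σ`):
`(N^{(h,k)})_{b,a} = √d · R_{(a,b),(k,h)}`. -/
def krausOf (d : ℕ) (R : Matrix (Fin d × Fin d) (Fin d × Fin d) ℂ) (h k : Fin d) :
    Matrix (Fin d) (Fin d) ℂ :=
  Matrix.of fun b a => ((Real.sqrt d : ℝ) : ℂ) * R (a, b) (k, h)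

lemma Matrix.PosSemidef.posSemidef_sqrt {n 𝕜 : Type*} [Fintype n] [RCLike 𝕜] [DecidableEq n]
    {A : Matrix n n 𝕜} (hA : A.PosSemidef) : hA.sqrt.PosSemidef := by
  unfold Matrix.PosSemidef.sqrt
  rw [star_eq_conjTranspose]
  refine PosSemidef.mul_mul_conjTranspose_same ?_ _
  refine PosSemidef.diagonal fun i => ?_
  simp [Real.sqrt_nonneg]

lemma Matrix.PosSemidef.sqrt_mul_self {n 𝕜 : Type*} [Fintype n] [RCLike 𝕜] [DecidableEq n]
    {A : Matrix n n 𝕜} (hA : A.PosSemidef) : hA.sqrt * hA.sqrt = A := by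
  conv_rhs => rw [hA.1.spectral_theorem]
  unfold Matrix.PosSemidef.sqrt
  have hU : (star hA.1.eigenvectorUnitary : Matrix n n 𝕜) * (hA.1.eigenvectorUnitary : Matrix n n 𝕜) = 1 :=
    Unitary.coe_star_mul_self _
  rw [Unitary.conjStarAlgAut_apply]
  rw [show ∀ a b c d e : Matrix n n 𝕜, a * b * c * (a * d * e) = a * b * (c * a) * d * e by
    intros; simp only [Matrix.mul_assoc]]
  rw [hU, Matrix.mul_one, Matrix.mul_assoc _ (diagonal _) (diagonal _), diagonal_mul_diagonal]
  congr 2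
  ext i j
  rw [diagonal_apply, diagonal_apply]
  split_ifs
  · simp only [Function.comp_apply, ← RCLike.ofReal_mul]
    rw [Real.mul_self_sqrt (hA.eigenvalues_nonneg i)]
  · rfl

/-- Reordering a triple sum. -/
lemma sum3aux {d : ℕ} (f : Fin d → Fin d → Fin d → ℂ) :
    ∑ h, ∑ k, ∑ b, f h k b = ∑ b, ∑ k, ∑ h, f h k b :=
  calc ∑ h, ∑ k, ∑ b, f h k b = ∑ k, ∑ h, ∑ b, f h k b := Finset.sum_comm
    _ = ∑ k, ∑ b, ∑ h, f h k b := Finset.sum_congr rfl fun _ _ => Finset.sum_comm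
    _ = ∑ b, ∑ k, ∑ h, f h k b := Finset.sum_comm

/-- The teleportation-based Kraus operators built from `√σ` form a
trace-preserving set, and the induced channel has Choi state `σ`. -/
theorem stmt17 (d : ℕ) (hd : 1 ≤ d)
    (σ : Matrix (Fin d × Fin d) (Fin d × Fin d) ℂ)
    (hσ : σ.PosSemidef) (htr : σ.trace = 1)
    (hpt : ptraceB σ = ((d : ℂ))⁻¹ • (1 : Matrix (Fin d) (Fin d) ℂ)) :
    (∑ h : Fin d, ∑ k : Fin d,
        (krausOf d hσ.sqrt h k)ᴴ * krausOf d hσ.sqrt h k) = 1 ∧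
    idTensorFun
      (fun τ => ∑ h : Fin d, ∑ k : Fin d,
        krausOf d hσ.sqrt h k * τ * (krausOf d hσ.sqrt h k)ᴴ)
      (maxEnt d) = σ := by
  have hdC : (d : ℂ) ≠ 0 := Nat.cast_ne_zero.mpr (by omega)
  set R := hσ.sqrt with hRdef
  have hH : R.IsHermitian := hσ.posSemidef_sqrt.isHermitian
  have hconj : ∀ x y, (starRingEnd ℂ) (R x y) = R y x := fun x y => by
    conv_rhs => rw [← hH]
    rfl
  have hRR : R * R = σ := hσ.sqrt_mul_self
  have hc : ((Real.sqrt d : ℝ) : ℂ) * ((Real.sqrt d : ℝ) : ℂ) = (d : ℂ) := by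
    rw [← Complex.ofReal_mul, Real.mul_self_sqrt (by positivity)]
    simp
  constructor
  · ext a a'
    have lhs_eq : (∑ h : Fin d, ∑ k : Fin d,
        (krausOf d R h k)ᴴ * krausOf d R h k) a a'
        = (d : ℂ) * ∑ b, σ (a', b) (a, b) := by
      simp only [Matrix.sum_apply, Matrix.mul_apply, Matrix.conjTranspose_apply,
        krausOf, Matrix.of_apply, star_mul', Complex.star_def, Complex.conj_ofReal, hconj,
        ← hRR, Finset.mul_sum, Fintype.sum_prod_type]
      rw [sum3aux]
      refine Finset.sum_congr rfl fun b _ => Finset.sum_congr rfl fun k _ =>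
        Finset.sum_congr rfl fun h _ => ?_
      rw [← hc]; ring
    rw [lhs_eq]
    have hpe : (∑ b, σ (a', b) (a, b)) = ptraceB σ a' a := rfl
    rw [hpe, hpt]
    simp only [Matrix.smul_apply, Matrix.one_apply, smul_eq_mul]
    by_cases hh : a' = a
    · subst hh; simp [mul_inv_cancel₀ hdC]
    · simp [hh, Ne.symm hh]
  · ext ⟨i, b⟩ ⟨j, b'⟩
    show (∑ h : Fin d, ∑ k : Fin d,
        krausOf d R h k * (Matrix.of fun a a' => maxEnt d (i, a) (j, a')) *
          (krausOf d R h k)ᴴ) b b' = σ (i, b) (j, b')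
    have key : ∀ h k : Fin d,
        (krausOf d R h k * (Matrix.of fun a a' => maxEnt d (i, a) (j, a')) *
          (krausOf d R h k)ᴴ) b b' = R (i, b) (k, h) * R (k, h) (j, b') := by
      intro h k
      simp only [Matrix.mul_apply, Matrix.conjTranspose_apply, krausOf, Matrix.of_apply,
        maxEnt, star_mul', Complex.star_def, Complex.conj_ofReal, hconj, ite_and,
        mul_ite, ite_mul, mul_zero, zero_mul, Finset.sum_ite_eq, Finset.sum_ite_eq',
        Finset.mem_univ, if_true]
      field_simp
      rw [← hc]; ring
    simp only [Matrix.sum_apply, key, ← hRR, Matrix.mul_apply, Fintype.sum_prod_type]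
    exact Finset.sum_comm
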